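/- For every real p with 1/2 ≤ p ≤ 1, the strategy S₃ is the most successful of the three: F₁(p) ≤ F₃(p) and F₂(p) ≤ F₃(p), with equality of all three at p = 1/2 where F₁(1/2) = F₂(1/2) = F₃(1/2) = 7/20. -/
import Mathlib


/-- Win rate of strategy `S₁`. -/
noncomputable def F₁ (p : ℝ) : ℝ :=
  p * (1 + p + p ^ 2 + 3 * p ^ 3 - 3 * p ^ 4 + p ^ 5) /
    ((1 + p) * (2 - p) * (1 + p ^ 2))

/-- Win rate of strategy `S₂`. -/
noncomputable def F₂ (p : ℝ) : ℝ :=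
  p * (1 - p + p ^ 2 + p ^ 3) / (2 - 3 * p + 3 * p ^ 2)

/-- Win rate of strategy `S₃`. -/
noncomputable def F₃ (p : ℝ) : ℝ :=
  p * (1 + 5 * p - 10 * p ^ 2 + 10 * p ^ 3 - 5 * p ^ 4 + p ^ 5) /
    ((2 - 2 * p + p ^ 2) * (1 + p) * (2 - p))

/-- For `1/2 ≤ p ≤ 1`, `S₃` is the most successful of the three strategies, with
all three agreeing at `p = 1/2` where their value is `7/20`. -/
theorem S3_best_above_half :
    (∀ p : ℝ, 1 / 2 ≤ p → p ≤ 1 → F₁ p ≤ F₃ p ∧ F₂ p ≤ F₃ p) ∧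
    F₁ (1 / 2) = 7 / 20 ∧ F₂ (1 / 2) = 7 / 20 ∧ F₃ (1 / 2) = 7 / 20 := by
  refine ⟨fun p h1 h2 => ?_, by norm_num [F₁], by norm_num [F₂], by norm_num [F₃]⟩
  have hA : (0:ℝ) ≤ p - 1/2 := by linarith
  have hB : (0:ℝ) ≤ 1 - p := by linarith
  have hp : (0:ℝ) < 1 + p := by linarith
  have hq : (0:ℝ) < 2 - p := by linarith
  have d1 : (0:ℝ) < (1 + p) * (2 - p) * (1 + p ^ 2) :=
    mul_pos (mul_pos hp hq) (by positivity)
  have d2 : (0:ℝ) < 2 - 3 * p + 3 * p ^ 2 := by nlinarith [sq_nonneg (p - 1/2)]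
  have d3 : (0:ℝ) < (2 - 2 * p + p ^ 2) * (1 + p) * (2 - p) := by
    have h : (0:ℝ) < 2 - 2 * p + p ^ 2 := by nlinarith [sq_nonneg (p - 1)]
    exact mul_pos (mul_pos h hp) hq
  constructor
  · rw [F₁, F₃, div_le_div_iff₀ d1 d3]
    nlinarith [mul_nonneg (pow_nonneg hA 1) (pow_nonneg hB 6),
      mul_nonneg (pow_nonneg hA 2) (pow_nonneg hB 5),
      mul_nonneg (pow_nonneg hA 3) (pow_nonneg hB 4),
      mul_nonneg (pow_nonneg hA 4) (pow_nonneg hB 3),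
      mul_nonneg (pow_nonneg hA 5) (pow_nonneg hB 2),
      mul_nonneg (pow_nonneg hA 6) (pow_nonneg hB 1),
      pow_nonneg hA 7]
  · rw [F₂, F₃, div_le_div_iff₀ d2 d3]
    nlinarith [mul_nonneg (pow_nonneg hA 1) (pow_nonneg hB 6),
      mul_nonneg (pow_nonneg hA 2) (pow_nonneg hB 5),
      mul_nonneg (pow_nonneg hA 3) (pow_nonneg hB 4),
      mul_nonneg (pow_nonneg hA 4) (pow_nonneg hB 3),
      mul_nonneg (pow_nonneg hA 5) (pow_nonneg hB 2),
      mul_nonneg (pow_nonneg hA 6) (pow_nonneg hB 1),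
      pow_nonneg hA 7]
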